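/- Let r₁₁ > 0, r₂₂ < 0, r₁₂ > 0, r₂₁ < 0 with D := r₁₁r₂₂ - r₁₂r₂₁ > 0, and let d₂ > 0. Define f(y) = (d₂r₁₁y - D)/(y(d₂y - r₂₂)) for y > 0. Then f attains its maximum on (0,∞) at y* = (D + √(-r₁₂r₂₁·D))/(d₂r₁₁); indeed f'(y) = (-r₁₁d₂²y² + 2d₂Dy - r₂₂D)/(y²(d₂y - r₂₂)²) vanishes at y = y*, is positive for 0 < y < y*, and negative for y > y*. -/

import Mathlib

theorem turing_threshold_maximizer
    (r11 r12 r21 r22 d2 : ℝ)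
    (h11 : 0 < r11) (h22 : r22 < 0) (h12 : 0 < r12) (h21 : r21 < 0)
    (D : ℝ) (hD : D = r11 * r22 - r12 * r21) (hDpos : 0 < D)
    (hd2 : 0 < d2)
    (f : ℝ → ℝ) (hf : f = fun y => (d2 * r11 * y - D) / (y * (d2 * y - r22)))
    (ystar : ℝ)
    (hy : ystar = (D + Real.sqrt (-r12 * r21 * D)) / (d2 * r11)) :
    (∀ y : ℝ, 0 < y → deriv f y =
      (-r11 * d2 ^ 2 * y ^ 2 + 2 * d2 * D * y - r22 * D) / (y ^ 2 * (d2 * y - r22) ^ 2)) ∧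
    deriv f ystar = 0 ∧
    (∀ y : ℝ, 0 < y → y < ystar → 0 < deriv f y) ∧
    (∀ y : ℝ, ystar < y → deriv f y < 0) ∧
    (∀ y : ℝ, 0 < y → f y ≤ f ystar) := by
  set s := Real.sqrt (-r12 * r21 * D) with hsdef
  have hprod : 0 < -r12 * r21 * D := by nlinarith [mul_pos (mul_pos h12 (neg_pos.mpr h21)) hDpos]
  have hs2 : s ^ 2 = -r12 * r21 * D := by
    rw [sq, hsdef, Real.mul_self_sqrt hprod.le]
  have hs : 0 < s := Real.sqrt_pos.mpr hprod
  have hsD : D < s := by nlinarith [hs2, mul_pos hDpos (mul_pos h11 (neg_pos.mpr h22)), mul_pos hs hDpos]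
  have ha : 0 < d2 * r11 := mul_pos hd2 h11
  have hyspos : 0 < ystar := by rw [hy]; positivity
  -- derivative formula
  have hdiff : ∀ y : ℝ, 0 < y → HasDerivAt f
      ((-r11 * d2 ^ 2 * y ^ 2 + 2 * d2 * D * y - r22 * D) / (y ^ 2 * (d2 * y - r22) ^ 2)) y := by
    intro y hy0
    have hyne : y ≠ 0 := ne_of_gt hy0
    have hd22 : (0:ℝ) < d2 * y - r22 := by nlinarith
    have hdne : d2 * y - r22 ≠ 0 := ne_of_gt hd22
    have hne : y * (d2 * y - r22) ≠ 0 := mul_ne_zero hyne hdne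
    have h1 : HasDerivAt (fun y : ℝ => d2 * r11 * y - D) (d2 * r11) y := by
      simpa using ((hasDerivAt_id y).const_mul (d2 * r11)).sub_const D
    have h2 : HasDerivAt (fun y : ℝ => y * (d2 * y - r22)) (2 * d2 * y - r22) y := by
      have h2' := (hasDerivAt_id y).mul (((hasDerivAt_id y).const_mul d2).sub_const r22)
      simp only [id] at h2'
      exact h2'.congr_deriv (by ring)
    have h3 := h1.div h2 hne
    rw [hf]
    exact h3.congr_deriv (by field_simp; ring)
  have hderiv : ∀ y : ℝ, 0 < y → deriv f y =
      (-r11 * d2 ^ 2 * y ^ 2 + 2 * d2 * D * y - r22 * D) / (y ^ 2 * (d2 * y - r22) ^ 2) :=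
    fun y hy0 => (hdiff y hy0).deriv
  have hys : d2 * r11 * ystar = D + s := by
    rw [hy]; field_simp
  -- factorization of the numerator
  have hfac : ∀ y : ℝ, -r11 * d2 ^ 2 * y ^ 2 + 2 * d2 * D * y - r22 * D =
      d2 * (ystar - y) * (d2 * r11 * y - D + s) := by
    intro y
    have hr : r11 ≠ 0 := ne_of_gt h11
    have hd2ne : d2 ≠ 0 := ne_of_gt hd2
    rw [hy]
    field_simp
    linear_combination D * hD - hs2
  have hnumpos : ∀ y : ℝ, 0 < y → y < ystar →
      0 < -r11 * d2 ^ 2 * y ^ 2 + 2 * d2 * D * y - r22 * D := by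
    intro y hy0 hylt
    rw [hfac]
    have h1 : 0 < ystar - y := by linarith
    have h2 : 0 < d2 * r11 * y - D + s := by nlinarith [mul_pos ha hy0]
    positivity
  have hnumneg : ∀ y : ℝ, ystar < y →
      -r11 * d2 ^ 2 * y ^ 2 + 2 * d2 * D * y - r22 * D < 0 := by
    intro y hylt
    rw [hfac]
    have hy0 : 0 < y := lt_trans hyspos hylt
    have h1 : ystar - y < 0 := by linarith
    have h2 : 0 < d2 * r11 * y - D + s := by nlinarith [mul_pos ha hy0]
    nlinarith [mul_pos (mul_pos hd2 (by linarith : (0:ℝ) < y - ystar)) h2]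
  have hdenpos : ∀ y : ℝ, 0 < y → 0 < y ^ 2 * (d2 * y - r22) ^ 2 := by
    intro y hy0
    have h2 : (0:ℝ) < d2 * y - r22 := by nlinarith
    positivity
  have hpos : ∀ y : ℝ, 0 < y → y < ystar → 0 < deriv f y := by
    intro y hy0 hylt
    rw [hderiv y hy0]
    exact div_pos (hnumpos y hy0 hylt) (hdenpos y hy0)
  have hneg : ∀ y : ℝ, ystar < y → deriv f y < 0 := by
    intro y hylt
    have hy0 : 0 < y := lt_trans hyspos hylt
    rw [hderiv y hy0]
    exact div_neg_of_neg_of_pos (hnumneg y hylt) (hdenpos y hy0)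
  have hderivystar : deriv f ystar = 0 := by
    rw [hderiv ystar hyspos, hfac]
    simp
  refine ⟨hderiv, hderivystar, hpos, hneg, ?_⟩
  intro y hy0
  have hcont : ∀ a b : ℝ, 0 < a → ContinuousOn f (Set.Icc a b) := by
    intro a b ha0
    intro x hx
    have hx0 : 0 < x := lt_of_lt_of_le ha0 hx.1
    exact ((hdiff x hx0).differentiableAt.continuousAt).continuousWithinAt
  rcases lt_trichotomy y ystar with hlt | heq | hgt
  · have hmono : StrictMonoOn f (Set.Icc y ystar) := by
      apply strictMonoOn_of_deriv_pos (convex_Icc y ystar) (hcont y ystar hy0)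
      intro x hx
      rw [interior_Icc] at hx
      exact hpos x (lt_trans hy0 hx.1) hx.2
    exact le_of_lt (hmono ⟨le_refl y, le_of_lt hlt⟩ ⟨le_of_lt hlt, le_refl ystar⟩ hlt)
  · rw [heq]
  · have hanti : StrictAntiOn f (Set.Icc ystar y) := by
      apply strictAntiOn_of_deriv_neg (convex_Icc ystar y) (hcont ystar y hyspos)
      intro x hx
      rw [interior_Icc] at hx
      exact hneg x hx.1
    exact le_of_lt (hanti ⟨le_refl ystar, le_of_lt hgt⟩ ⟨le_of_lt hgt, le_refl y⟩ hgt)
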